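/- An initial condition x₀ ∈ F^n is consistent for the regular DAE E ẋ = A x + q (with q smooth) if and only if x₀ = A^con x₀ + ∑_{k=1}^{ν} C_k q^{(k−1)}(0); and in that case the initial value problem has a unique C^∞ solution on [0,τ]. -/

import Mathlib

set_option linter.unusedSectionVars false
set_option maxHeartbeats 1000000
open Matrix NormedSpace

namespace DAEaux
variable {F : Type*} [RCLike F]

section lin
variable {α β : Type*} [Fintype α] [Fintype β]

noncomputable def lcm (L : (α → F) →ₗ[F] (β → F)) : (α → F) →L[ℝ] (β → F) :=
  (LinearMap.toContinuousLinearMap L).restrictScalars ℝ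

@[simp] lemma lcm_apply (L : (α → F) →ₗ[F] (β → F)) (v : α → F) : lcm L v = L v := rfl

lemma hasDerivAt_lin (L : (α → F) →ₗ[F] (β → F)) {x : ℝ → α → F} {x' : α → F} {t : ℝ}
    (h : HasDerivAt x x' t) : HasDerivAt (fun s => L (x s)) (L x') t := by
  exact (lcm (F := F) L).hasFDerivAt.comp_hasDerivAt t h

lemma contDiff_lin {n : WithTop ℕ∞} (L : (α → F) →ₗ[F] (β → F)) {x : ℝ → α → F}
    (h : ContDiff ℝ n x) : ContDiff ℝ n fun s => L (x s) := by
  exact ((lcm (F := F) L).contDiff).comp h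

lemma smooth_iteratedDeriv {x : ℝ → α → F} (h : ContDiff ℝ (⊤ : ℕ∞) x) (k : ℕ) :
    ContDiff ℝ (⊤ : ℕ∞) (iteratedDeriv k x) := by
  rw [iteratedDeriv_eq_iterate]
  exact h.iterate_deriv k

lemma hasDerivAt_iteratedDeriv {x : ℝ → α → F} (h : ContDiff ℝ (⊤ : ℕ∞) x) (k : ℕ) (t : ℝ) :
    HasDerivAt (iteratedDeriv k x) (iteratedDeriv (k + 1) x t) t := by
  rw [iteratedDeriv_succ]
  exact ((smooth_iteratedDeriv h k).differentiable
    (by simp)).differentiableAt.hasDerivAt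

lemma iteratedDeriv_lin (L : (α → F) →ₗ[F] (β → F)) {x : ℝ → α → F}
    (h : ContDiff ℝ (⊤ : ℕ∞) x) (k : ℕ) :
    iteratedDeriv k (fun s => L (x s)) = fun t => L (iteratedDeriv k x t) := by
  induction k with
  | zero => simp
  | succ k ih =>
    funext t
    rw [iteratedDeriv_succ, ih]
    rw [(hasDerivAt_lin L (hasDerivAt_iteratedDeriv h k t)).deriv]

end lin

section mat
variable {n : ℕ}

/-- Bootstrap: a global solution of a linear ODE with smooth inhomogeneity is smooth. -/
lemma smooth_of_linODE (Jm : Matrix (Fin n) (Fin n) F) {f r : ℝ → Fin n → F}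
    (hr : ContDiff ℝ (⊤ : ℕ∞) r) (hf : ∀ t, HasDerivAt f (Jm *ᵥ f t + r t) t) :
    ContDiff ℝ (⊤ : ℕ∞) f := by
  have hdiff : Differentiable ℝ f := fun t => (hf t).differentiableAt
  have hderiv : deriv f = fun t => Jm *ᵥ f t + r t := funext fun t => (hf t).deriv
  have key : ∀ m : ℕ, ContDiff ℝ (m : ℕ) f := by
    intro m
    induction m with
    | zero => simpa [contDiff_zero] using hdiff.continuous
    | succ m ih =>
      have : ((m + 1 : ℕ) : WithTop ℕ∞) = (m : WithTop ℕ∞) + 1 := by push_cast; rfl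
      rw [this]
      refine contDiff_succ_iff_deriv.2 ⟨hdiff, ?_, ?_⟩
      · intro h; exact absurd h (by simp [← WithTop.coe_natCast])
      · rw [hderiv]
        have h1 : ContDiff ℝ (m : ℕ) fun t => Jm *ᵥ f t := by
          simpa using contDiff_lin (Matrix.mulVecLin Jm) ih
        exact h1.add (hr.of_le (by exact_mod_cast le_top))
  exact contDiff_infty.2 key

/-- On `[0,τ]`, any differentiable solution of `N φ' = φ` with `N` nilpotent vanishes. -/
lemma vanish_of_nilpotent {ν : ℕ} {N : Matrix (Fin n) (Fin n) F} (hN : N ^ ν = 0)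
    {τ : ℝ} (hτ : 0 < τ) {φ : ℝ → Fin n → F} (hφ : Differentiable ℝ φ)
    (heq : ∀ t ∈ Set.Icc (0 : ℝ) τ, N *ᵥ deriv φ t = φ t) :
    ∀ t ∈ Set.Icc (0 : ℝ) τ, φ t = 0 := by
  have main : ∀ m : ℕ, ∀ t ∈ Set.Icc (0 : ℝ) τ, (N ^ (ν - m)) *ᵥ φ t = 0 := by
    intro m
    induction m with
    | zero => intro t ht; simp [Nat.sub_zero, hN]
    | succ m ih =>
      rcases le_or_gt ν m with hm | hm
      · have h1 : ν - (m + 1) = ν - m := by omega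
        rw [h1]; exact ih
      · have h1 : ν - m = (ν - (m + 1)) + 1 := by omega
        set k := ν - (m + 1) with hk
        intro t ht
        have hzero : ∀ s ∈ Set.Icc (0 : ℝ) τ, (N ^ (k + 1)) *ᵥ φ s = 0 := by
          intro s hs; rw [← h1]; exact ih s hs
        have hψ : HasDerivAt (fun s => (N ^ (k + 1)) *ᵥ φ s) ((N ^ (k + 1)) *ᵥ deriv φ t) t := by
          simpa using hasDerivAt_lin (Matrix.mulVecLin (N ^ (k + 1)))
            (hφ t).hasDerivAt
        have hd0 : (N ^ (k + 1)) *ᵥ deriv φ t = 0 := by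
          have hu := (uniqueDiffOn_Icc hτ) t ht
          have h2 : HasDerivWithinAt (fun s => (N ^ (k + 1)) *ᵥ φ s) 0 (Set.Icc 0 τ) t :=
            (hasDerivWithinAt_const t _ (0 : Fin n → F)).congr
              (fun s hs => hzero s hs) (hzero t ht)
          exact hu.eq_deriv _ hψ.hasDerivWithinAt h2
        calc (N ^ k) *ᵥ φ t = (N ^ k) *ᵥ (N *ᵥ deriv φ t) := by rw [heq t ht]
          _ = (N ^ (k + 1)) *ᵥ deriv φ t := by rw [mulVec_mulVec, ← pow_succ]
          _ = 0 := hd0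
  intro t ht
  simpa using main ν t ht


variable (F) in
/-- Extension by zero on the right summand, as a linear map. -/
def sumL {α β : Type*} : (α → F) →ₗ[F] ((α ⊕ β) → F) where
  toFun a := Sum.elim a (0 : β → F)
  map_add' a b := by funext i; cases i <;> simp
  map_smul' r a := by funext i; cases i <;> simp

variable (F) in
/-- Extension by zero on the left summand, as a linear map. -/
def sumR {α β : Type*} : (β → F) →ₗ[F] ((α ⊕ β) → F) where
  toFun a := Sum.elim (0 : α → F) a
  map_add' a b := by funext i; cases i <;> simp
  map_smul' r a := by funext i; cases i <;> simp

@[simp] lemma sumL_apply {α β : Type*} (a : α → F) :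
    sumL F (β := β) a = Sum.elim a (0 : β → F) := rfl

@[simp] lemma sumR_apply {α β : Type*} (a : β → F) :
    sumR F (α := α) a = Sum.elim (0 : α → F) a := rfl

/-- Construction of the algebraic (nilpotent) part of the solution. -/
lemma exists_nilpotent_sol {na ν : ℕ} {N : Matrix (Fin na) (Fin na) F} (hN : N ^ ν = 0)
    {p2 : ℝ → Fin na → F} (hp2 : ContDiff ℝ (⊤ : ℕ∞) p2) :
    ∃ v : ℝ → Fin na → F, ContDiff ℝ (⊤ : ℕ∞) v ∧ Differentiable ℝ v ∧
      (∀ t, N *ᵥ deriv v t = v t + p2 t) ∧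
      (∀ t, v t = -∑ k ∈ Finset.range ν, (N ^ k) *ᵥ iteratedDeriv k p2 t) := by
  refine ⟨fun t => -∑ k ∈ Finset.range ν, (N ^ k) *ᵥ iteratedDeriv k p2 t, ?_, ?_, ?_, fun t => rfl⟩
  case _ =>
    refine ContDiff.neg (ContDiff.sum fun k _ => ?_)
    exact contDiff_lin (F := F) (Matrix.mulVecLin (N ^ k)) (smooth_iteratedDeriv hp2 k)
  all_goals
    have hv' : ∀ t, HasDerivAt
        (fun t => -∑ k ∈ Finset.range ν, (N ^ k) *ᵥ iteratedDeriv k p2 t)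
        (-∑ k ∈ Finset.range ν, (N ^ k) *ᵥ iteratedDeriv (k + 1) p2 t) t := by
      intro t
      refine HasDerivAt.neg (HasDerivAt.fun_sum fun k _ => ?_)
      exact hasDerivAt_lin (F := F) (Matrix.mulVecLin (N ^ k)) (hasDerivAt_iteratedDeriv hp2 k t)
  case _ => exact fun t => (hv' t).differentiableAt
  intro t
  rw [(hv' t).deriv]
  have l1 : N *ᵥ (-∑ k ∈ Finset.range ν, (N ^ k) *ᵥ iteratedDeriv (k + 1) p2 t)
      = -∑ k ∈ Finset.range ν, (N ^ (k + 1)) *ᵥ iteratedDeriv (k + 1) p2 t := by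
    show Matrix.mulVecLin N _ = _
    rw [map_neg, map_sum]
    congr 1
    refine Finset.sum_congr rfl fun k _ => ?_
    simp [Matrix.mulVecLin_apply, mulVec_mulVec, pow_succ']
  have key : ∑ k ∈ Finset.range ν, (N ^ (k + 1)) *ᵥ iteratedDeriv (k + 1) p2 t
      = (∑ k ∈ Finset.range ν, (N ^ k) *ᵥ iteratedDeriv k p2 t) - p2 t := by
    have h1 := Finset.sum_range_succ' (fun j => (N ^ j) *ᵥ iteratedDeriv j p2 t) ν
    have h2 := Finset.sum_range_succ (fun j => (N ^ j) *ᵥ iteratedDeriv j p2 t) ν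
    simp only [hN, Matrix.zero_mulVec, add_zero, pow_zero, Matrix.one_mulVec,
      iteratedDeriv_zero] at h1 h2
    rw [h2] at h1
    rw [h1]
    abel
  rw [l1, key]
  simp only [neg_sub]
  abel

end mat

section ode
variable {n : ℕ}

attribute [local instance] Matrix.linftyOpNormedRing Matrix.linftyOpNormedAlgebra

noncomputable def mvCLM : Matrix (Fin n) (Fin n) F →L[ℝ] ((Fin n → F) →L[ℝ] (Fin n → F)) :=
  LinearMap.toContinuousLinearMap
  { toFun := fun M => ((LinearMap.toContinuousLinearMap (Matrix.mulVecLin M)).restrictScalars ℝ)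
    map_add' := by
      intro M M'; ext v i
      simp [Matrix.add_mulVec]
    map_smul' := by
      intro r M; ext v i
      simp [Matrix.smul_mulVec] }

@[simp] lemma mvCLM_apply (M : Matrix (Fin n) (Fin n) F) (v : Fin n → F) :
    mvCLM (F := F) (n := n) M v = M *ᵥ v := rfl

lemma hasDerivAt_mulVec_clm {M : ℝ → Matrix (Fin n) (Fin n) F} {M' : Matrix (Fin n) (Fin n) F}
    {w : ℝ → Fin n → F} {w' : Fin n → F} {t : ℝ}
    (hM : HasDerivAt M M' t) (hw : HasDerivAt w w' t) :
    HasDerivAt (fun s => M s *ᵥ w s) (M' *ᵥ w t + M t *ᵥ w') t := by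
  have h1 : HasDerivAt (fun s => mvCLM (F := F) (n := n) (M s)) (mvCLM (F := F) (n := n) M') t := by
    exact HasFDerivAt.comp_hasDerivAt (l := ⇑(mvCLM (F := F) (n := n))) (l' := mvCLM (F := F) (n := n)) t
      (mvCLM (F := F) (n := n)).hasFDerivAt hM
  simpa using h1.clm_apply hw


lemma lipschitz_shift {K : NNReal} {f : (Fin n → F) → (Fin n → F)} (h : LipschitzWith K f)
    (c : Fin n → F) : LipschitzWith K fun x => f x + c := fun x y => by
  simpa [edist_add_right] using h x y

/-- Existence of a global smooth solution of `u' = J u + p₁`, `u 0 = c`. -/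
lemma exists_linODE (Jm : Matrix (Fin n) (Fin n) F) {p1 : ℝ → Fin n → F}
    (hp1 : ContDiff ℝ (⊤ : ℕ∞) p1) (c : Fin n → F) :
    ∃ u : ℝ → Fin n → F, ContDiff ℝ (⊤ : ℕ∞) u ∧ u 0 = c ∧
      ∀ t, HasDerivAt u (Jm *ᵥ u t + p1 t) t := by
  have hΦ : ∀ t : ℝ, HasDerivAt (fun s : ℝ => exp (s • Jm)) (exp (t • Jm) * Jm) t :=
    fun t => hasDerivAt_exp_smul_const Jm t
  have hΦc : Continuous fun s : ℝ => exp (s • Jm) :=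
    Differentiable.continuous (fun s => (hΦ s).differentiableAt)
  set h : ℝ → Fin n → F := fun s => exp ((-s) • Jm) *ᵥ p1 s with hh_def
  have hhc : Continuous h := by
    have : Continuous fun s : ℝ => mvCLM (F := F) (n := n) (exp ((-s) • Jm)) :=
      (mvCLM (F := F) (n := n)).continuous.comp (hΦc.comp continuous_neg)
    simpa [hh_def] using this.clm_apply (hp1.continuous)
  set g : ℝ → Fin n → F := fun t => ∫ s in (0 : ℝ)..t, h s with hg_def
  have hg : ∀ t, HasDerivAt g (h t) t := fun t =>
    intervalIntegral.integral_hasDerivAt_right (hhc.intervalIntegrable _ _)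
      (hhc.stronglyMeasurableAtFilter _ _) hhc.continuousAt
  set u : ℝ → Fin n → F := fun t => exp (t • Jm) *ᵥ (c + g t) with hu_def
  have hueq : ∀ t, HasDerivAt u (Jm *ᵥ u t + p1 t) t := by
    intro t
    have hw : HasDerivAt (fun s => c + g s) (h t) t := (hg t).const_add c
    have h1 := hasDerivAt_mulVec_clm (hΦ t) hw
    have hcomm : exp (t • Jm) * Jm = Jm * exp (t • Jm) :=
      (((Commute.refl Jm).smul_left t).exp_left).eq
    have h2 : (exp (t • Jm) * Jm) *ᵥ (c + g t) = Jm *ᵥ u t := by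
      rw [hcomm, ← mulVec_mulVec]
    have h3 : exp (t • Jm) *ᵥ h t = p1 t := by
      rw [hh_def]
      rw [mulVec_mulVec]
      have hc2 : Commute (t • Jm) ((-t) • Jm) :=
        ((Commute.refl Jm).smul_left t).smul_right (-t)
      have : exp (t • Jm) * exp ((-t) • Jm) = 1 := by
        rw [← Matrix.exp_add_of_commute _ _ hc2, ← add_smul, add_neg_cancel, zero_smul, exp_zero]
      rw [this, one_mulVec]
    rw [h2] at h1
    simpa [h3] using h1
  have hu0 : u 0 = c := by
    simp [hu_def, hg_def, intervalIntegral.integral_same, zero_smul, exp_zero, one_mulVec]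
  exact ⟨u, smooth_of_linODE Jm hp1 hueq, hu0, hueq⟩

/-- Uniqueness for `f' = J f + p₁` on `[0, τ]`. -/
lemma linODE_unique (Jm : Matrix (Fin n) (Fin n) F) {p1 : ℝ → Fin n → F} (hp1c : Continuous p1)
    {f g : ℝ → Fin n → F} {τ : ℝ}
    (hfc : Differentiable ℝ f) (hf : ∀ t ∈ Set.Icc (0 : ℝ) τ, deriv f t = Jm *ᵥ f t + p1 t)
    (hgc : Differentiable ℝ g) (hg : ∀ t ∈ Set.Icc (0 : ℝ) τ, deriv g t = Jm *ᵥ g t + p1 t)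
    (h0 : f 0 = g 0) : Set.EqOn f g (Set.Icc 0 τ) := by
  set L : (Fin n → F) →L[ℝ] (Fin n → F) :=
    ((LinearMap.toContinuousLinearMap (Matrix.mulVecLin Jm)).restrictScalars ℝ) with hL
  have hlip : ∀ t : ℝ, LipschitzWith ‖L‖₊ fun x : Fin n → F => Jm *ᵥ x + p1 t := by
    intro t
    exact lipschitz_shift L.lipschitz (p1 t)
  refine ODE_solution_unique hlip hfc.continuous.continuousOn ?_
    hgc.continuous.continuousOn ?_ h0
  · intro t ht
    have h1 : HasDerivAt f (Jm *ᵥ f t + p1 t) t := hf t (Set.Ico_subset_Icc_self ht) ▸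
      (hfc t).hasDerivAt
    exact h1.hasDerivWithinAt
  · intro t ht
    have h1 : HasDerivAt g (Jm *ᵥ g t + p1 t) t := hg t (Set.Ico_subset_Icc_self ht) ▸
      (hgc t).hasDerivAt
    exact h1.hasDerivWithinAt

end ode
end DAEaux


open Matrix DAEaux in
/-- Consistency condition for a regular DAE `E ẋ = A x + q` (quasi-Weierstraß form
via `S, T`, nilpotent part `N` of index `ν`): `x₀` is consistent iff
`x₀ = A^con x₀ + ∑_{k=1}^{ν} C_k q^(k-1)(0)`, and in that case the initial value
problem has a unique solution on `[0, τ]`, which is moreover C^∞. -/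
theorem DAE_consistency_unique_solution {F : Type*} [RCLike F] {nd na ν : ℕ}
    (E A S T : Matrix (Fin nd ⊕ Fin na) (Fin nd ⊕ Fin na) F)
    (N : Matrix (Fin na) (Fin na) F) (J : Matrix (Fin nd) (Fin nd) F)
    (hS : IsUnit S.det) (hT : IsUnit T.det)
    (hE : S * E * T = Matrix.fromBlocks 1 0 0 N)
    (hA : S * A * T = Matrix.fromBlocks J 0 0 1)
    (hN : N ^ ν = 0)
    {τ : ℝ} (hτ : 0 < τ) (q : ℝ → (Fin nd ⊕ Fin na) → F)
    (hq : ContDiff ℝ (⊤ : ℕ∞) q) (x₀ : (Fin nd ⊕ Fin na) → F) :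
    ((∃ x : ℝ → (Fin nd ⊕ Fin na) → F, ContDiff ℝ 1 x ∧
        (∀ t ∈ Set.Icc (0 : ℝ) τ, E.mulVec (deriv x t) = A.mulVec (x t) + q t) ∧
        x 0 = x₀) ↔
      x₀ = (T * Matrix.fromBlocks 1 0 0 0 * T⁻¹).mulVec x₀ +
        ∑ k ∈ Finset.range ν,
          (-(T * Matrix.fromBlocks 0 0 0 (N ^ k) * S)).mulVec (iteratedDeriv k q 0)) ∧
    (x₀ = (T * Matrix.fromBlocks 1 0 0 0 * T⁻¹).mulVec x₀ +
        ∑ k ∈ Finset.range ν,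
          (-(T * Matrix.fromBlocks 0 0 0 (N ^ k) * S)).mulVec (iteratedDeriv k q 0) →
      ∃ x : ℝ → (Fin nd ⊕ Fin na) → F, ContDiff ℝ (⊤ : ℕ∞) x ∧
        (∀ t ∈ Set.Icc (0 : ℝ) τ, E.mulVec (deriv x t) = A.mulVec (x t) + q t) ∧
        x 0 = x₀ ∧
        ∀ y : ℝ → (Fin nd ⊕ Fin na) → F, ContDiff ℝ 1 y →
          (∀ t ∈ Set.Icc (0 : ℝ) τ, E.mulVec (deriv y t) = A.mulVec (y t) + q t) →
          y 0 = x₀ → Set.EqOn y x (Set.Icc (0 : ℝ) τ)) := by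
  classical
  have hSinv : S⁻¹ * S = 1 := Matrix.nonsing_inv_mul S hS
  have hTinv : T⁻¹ * T = 1 := Matrix.nonsing_inv_mul T hT
  have hTinv' : T * T⁻¹ = 1 := Matrix.mul_nonsing_inv T hT
  have hTmul : ∀ w : (Fin nd ⊕ Fin na) → F, T⁻¹ *ᵥ (T *ᵥ w) = w := by
    intro w; rw [mulVec_mulVec, hTinv, one_mulVec]
  have hTmul' : ∀ w : (Fin nd ⊕ Fin na) → F, T *ᵥ (T⁻¹ *ᵥ w) = w := by
    intro w; rw [mulVec_mulVec, hTinv', one_mulVec]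
  have hSinj : ∀ a b : (Fin nd ⊕ Fin na) → F, S *ᵥ a = S *ᵥ b → a = b := by
    intro a b hab
    have h2 := congrArg (fun w => S⁻¹ *ᵥ w) hab
    simpa [mulVec_mulVec, hSinv, one_mulVec] using h2
  -- inhomogeneity pieces
  have hp : ContDiff ℝ (⊤ : ℕ∞) (fun t => S *ᵥ q t) := by
    exact contDiff_lin (F := F) (Matrix.mulVecLin S) hq
  have hp1 : ContDiff ℝ (⊤ : ℕ∞) (fun t => (S *ᵥ q t) ∘ Sum.inl) := by
    exact contDiff_lin (F := F) (LinearMap.funLeft F F Sum.inl) hp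
  have hp2 : ContDiff ℝ (⊤ : ℕ∞) (fun t => (S *ᵥ q t) ∘ Sum.inr) := by
    exact contDiff_lin (F := F) (LinearMap.funLeft F F Sum.inr) hp
  have hp2q : ∀ (k : ℕ) (t : ℝ),
      iteratedDeriv k (fun s => (S *ᵥ q s) ∘ Sum.inr) t = (S *ᵥ iteratedDeriv k q t) ∘ Sum.inr := by
    intro k t
    have h1 := iteratedDeriv_lin
      ((LinearMap.funLeft F F Sum.inr) ∘ₗ Matrix.mulVecLin S) hq k
    exact congrFun h1 t
  -- block/elim helpers
  have hblk : ∀ (M1 : Matrix (Fin nd) (Fin nd) F) (M2 : Matrix (Fin na) (Fin na) F)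
      (w : (Fin nd ⊕ Fin na) → F), Matrix.fromBlocks M1 0 0 M2 *ᵥ w
        = Sum.elim (M1 *ᵥ (w ∘ Sum.inl)) (M2 *ᵥ (w ∘ Sum.inr)) := by
    intro M1 M2 w
    rw [Matrix.fromBlocks_mulVec]
    simp
  have helim : ∀ {a c : Fin nd → F} {b d : Fin na → F},
      Sum.elim a b = Sum.elim c d ↔ a = c ∧ b = d := by
    intro a c b d
    constructor
    · intro h
      exact ⟨funext fun i => congrFun h (Sum.inl i), funext fun j => congrFun h (Sum.inr j)⟩
    · rintro ⟨rfl, rfl⟩; rfl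
  have helim_add : ∀ (a c : Fin nd → F) (b d : Fin na → F),
      Sum.elim a b + Sum.elim c d = Sum.elim (a + c) (b + d) := by
    intro a c b d; funext i; cases i <;> simp
  have hpelim : ∀ t, S *ᵥ q t
      = Sum.elim ((S *ᵥ q t) ∘ Sum.inl) ((S *ᵥ q t) ∘ Sum.inr) := by
    intro t; funext i; cases i <;> rfl
  -- transformed coefficient identities
  have hE2m : Matrix.fromBlocks 1 0 0 N * T⁻¹ = S * E := by
    rw [← hE, Matrix.mul_assoc, hTinv', Matrix.mul_one]
  have hA2m : Matrix.fromBlocks J 0 0 1 * T⁻¹ = S * A := by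
    rw [← hA, Matrix.mul_assoc, hTinv', Matrix.mul_one]
  have hE2 : ∀ w, Matrix.fromBlocks 1 0 0 N *ᵥ (T⁻¹ *ᵥ w) = S *ᵥ (E *ᵥ w) := by
    intro w
    rw [mulVec_mulVec, hE2m, mulVec_mulVec]
  have hA2 : ∀ w, Matrix.fromBlocks J 0 0 1 *ᵥ (T⁻¹ *ᵥ w) = S *ᵥ (A *ᵥ w) := by
    intro w
    rw [mulVec_mulVec, hA2m, mulVec_mulVec]
  -- the two halves of the constructed solution
  obtain ⟨v, hvsm, hvdiff, hveq, hv0⟩ := exists_nilpotent_sol (F := F) hN hp2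
  obtain ⟨u, husm, hu0', hueq⟩ := exists_linODE (F := F) J hp1 ((T⁻¹ *ᵥ x₀) ∘ Sum.inl)
  have hudiff : Differentiable ℝ u := fun t => (hueq t).differentiableAt
  have huderiv : ∀ t, deriv u t = J *ᵥ u t + (S *ᵥ q t) ∘ Sum.inl := fun t => (hueq t).deriv
  -- the constructed solution
  have hzsm : ContDiff ℝ (⊤ : ℕ∞) (fun t => Sum.elim (u t) (v t)) := by
    have e : (fun t => Sum.elim (u t) (v t))
        = fun t => sumL F (u t) + sumR F (v t) := by
      funext t i; cases i <;> simp
    rw [e]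
    exact (contDiff_lin (F := F) (sumL F) husm).add (contDiff_lin (F := F) (sumR F) hvsm)
  have hz' : ∀ t, HasDerivAt (fun t => Sum.elim (u t) (v t))
      (Sum.elim (J *ᵥ u t + (S *ᵥ q t) ∘ Sum.inl) (deriv v t)) t := by
    intro t
    have h1 := (hasDerivAt_lin (F := F) (sumL F) (hueq t)).add
      (hasDerivAt_lin (F := F) (sumR F (α := Fin nd)) ((hvdiff t).hasDerivAt))
    have e1 : (fun s => sumL F (u s) + sumR F (v s)) = fun t => Sum.elim (u t) (v t) := by
      funext s i; cases i <;> simp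
    have e2 : sumL F (J *ᵥ u t + (S *ᵥ q t) ∘ Sum.inl) + sumR F (deriv v t)
        = Sum.elim (J *ᵥ u t + (S *ᵥ q t) ∘ Sum.inl) (deriv v t) := by
      funext i; cases i <;> simp
    rw [← e1, ← e2]
    exact h1
  have hxsm : ContDiff ℝ (⊤ : ℕ∞) (fun t => T *ᵥ Sum.elim (u t) (v t)) := by
    exact contDiff_lin (F := F) (Matrix.mulVecLin T) hzsm
  have hxd : ∀ t, deriv (fun t => T *ᵥ Sum.elim (u t) (v t)) t
      = T *ᵥ Sum.elim (J *ᵥ u t + (S *ᵥ q t) ∘ Sum.inl) (deriv v t) := by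
    intro t
    exact (hasDerivAt_lin (F := F) (Matrix.mulVecLin T) (hz' t)).deriv
  have hxeq : ∀ t, E *ᵥ deriv (fun t => T *ᵥ Sum.elim (u t) (v t)) t
      = A *ᵥ (T *ᵥ Sum.elim (u t) (v t)) + q t := by
    intro t
    rw [hxd t]
    apply hSinj
    rw [Matrix.mulVec_add, ← hE2, ← hA2, hTmul, hTmul]
    rw [hblk, hblk, Sum.elim_comp_inl, Sum.elim_comp_inr, Sum.elim_comp_inl, Sum.elim_comp_inr,
      one_mulVec, one_mulVec, hpelim t, helim_add, helim]
    exact ⟨rfl, hveq t⟩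
  -- characterization of the consistency right-hand side
  have hRHS : (T * Matrix.fromBlocks 1 0 0 0 * T⁻¹) *ᵥ x₀ +
      ∑ k ∈ Finset.range ν,
        (-(T * Matrix.fromBlocks 0 0 0 (N ^ k) * S)) *ᵥ iteratedDeriv k q 0
      = T *ᵥ Sum.elim ((T⁻¹ *ᵥ x₀) ∘ Sum.inl) (v 0) := by
    have hfirst : (T * Matrix.fromBlocks 1 0 0 0 * T⁻¹) *ᵥ x₀
        = T *ᵥ Sum.elim ((T⁻¹ *ᵥ x₀) ∘ Sum.inl) (0 : Fin na → F) := by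
      have e : (T * Matrix.fromBlocks 1 0 0 0 * T⁻¹) *ᵥ x₀
          = T *ᵥ (Matrix.fromBlocks 1 0 0 0 *ᵥ (T⁻¹ *ᵥ x₀)) := by
        simp only [mulVec_mulVec, Matrix.mul_assoc]
      rw [e, hblk, one_mulVec, Matrix.zero_mulVec]
    have hterm : ∀ k ∈ Finset.range ν,
        (-(T * Matrix.fromBlocks 0 0 0 (N ^ k) * S)) *ᵥ iteratedDeriv k q 0
        = T *ᵥ Sum.elim (0 : Fin nd → F)
            (-((N ^ k) *ᵥ iteratedDeriv k (fun s => (S *ᵥ q s) ∘ Sum.inr) 0)) := by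
      intro k _
      rw [Matrix.neg_mulVec]
      have e : (T * Matrix.fromBlocks 0 0 0 (N ^ k) * S) *ᵥ iteratedDeriv k q 0
          = T *ᵥ (Matrix.fromBlocks 0 0 0 (N ^ k) *ᵥ (S *ᵥ iteratedDeriv k q 0)) := by
        simp only [mulVec_mulVec, Matrix.mul_assoc]
      rw [e, hblk, Matrix.zero_mulVec, ← hp2q k 0]
      have eneg : -(Sum.elim (0 : Fin nd → F)
            ((N ^ k) *ᵥ iteratedDeriv k (fun s => (S *ᵥ q s) ∘ Sum.inr) 0))
          = Sum.elim (0 : Fin nd → F)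
            (-((N ^ k) *ᵥ iteratedDeriv k (fun s => (S *ᵥ q s) ∘ Sum.inr) 0)) := by
        funext i; cases i <;> simp
      rw [← Matrix.mulVec_neg, eneg]
    rw [Finset.sum_congr rfl hterm]
    have hsum : ∀ w : ℕ → Fin na → F,
        ∑ k ∈ Finset.range ν, T *ᵥ Sum.elim (0 : Fin nd → F) (w k)
          = T *ᵥ Sum.elim (0 : Fin nd → F) (∑ k ∈ Finset.range ν, w k) := by
      intro w
      have e : ∀ a : Fin na → F, T *ᵥ Sum.elim (0 : Fin nd → F) a
          = (Matrix.mulVecLin T ∘ₗ sumR F) a := fun a => rfl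
      simp only [e]
      rw [← map_sum]
    have efin : Sum.elim ((T⁻¹ *ᵥ x₀) ∘ Sum.inl) (0 : Fin na → F)
        + Sum.elim (0 : Fin nd → F) (∑ k ∈ Finset.range ν,
            -((N ^ k) *ᵥ iteratedDeriv k (fun s => (S *ᵥ q s) ∘ Sum.inr) 0))
        = Sum.elim ((T⁻¹ *ᵥ x₀) ∘ Sum.inl) (v 0) := by
      rw [helim_add, add_zero, zero_add, hv0 0, Finset.sum_neg_distrib]
    rw [hsum, hfirst, ← Matrix.mulVec_add, efin]
  have hconsiff : (x₀ = (T * Matrix.fromBlocks 1 0 0 0 * T⁻¹) *ᵥ x₀ +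
      ∑ k ∈ Finset.range ν,
        (-(T * Matrix.fromBlocks 0 0 0 (N ^ k) * S)) *ᵥ iteratedDeriv k q 0)
      ↔ (T⁻¹ *ᵥ x₀) ∘ Sum.inr = v 0 := by
    rw [hRHS]
    constructor
    · intro h
      have h2 := congrArg (fun w => T⁻¹ *ᵥ w) h
      simp only [hTmul] at h2
      funext j
      exact congrFun h2 (Sum.inr j)
    · intro h
      have h3 : Sum.elim ((T⁻¹ *ᵥ x₀) ∘ Sum.inl) (v 0) = T⁻¹ *ᵥ x₀ := by
        funext i
        cases i with
        | inl i => rfl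
        | inr j => exact (congrFun h j).symm
      rw [h3, hTmul']
  -- analysis of an arbitrary solution
  have main_unique : ∀ y : ℝ → (Fin nd ⊕ Fin na) → F, ContDiff ℝ 1 y →
      (∀ t ∈ Set.Icc (0 : ℝ) τ, E *ᵥ deriv y t = A *ᵥ y t + q t) → y 0 = x₀ →
      ((T⁻¹ *ᵥ x₀) ∘ Sum.inr = v 0 ∧
        Set.EqOn y (fun t => T *ᵥ Sum.elim (u t) (v t)) (Set.Icc (0 : ℝ) τ)) := by
    intro y hy1 hyeq hy0
    have hydiff : Differentiable ℝ y := hy1.differentiable one_ne_zero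
    have hw1diff : Differentiable ℝ (fun t => (T⁻¹ *ᵥ y t) ∘ Sum.inl) := fun t =>
      (hasDerivAt_lin (F := F) (LinearMap.funLeft F F Sum.inl ∘ₗ Matrix.mulVecLin T⁻¹)
        (hydiff t).hasDerivAt).differentiableAt
    have hw2diff : Differentiable ℝ (fun t => (T⁻¹ *ᵥ y t) ∘ Sum.inr) := fun t =>
      (hasDerivAt_lin (F := F) (LinearMap.funLeft F F Sum.inr ∘ₗ Matrix.mulVecLin T⁻¹)
        (hydiff t).hasDerivAt).differentiableAt
    have hw1d : ∀ t, deriv (fun t => (T⁻¹ *ᵥ y t) ∘ Sum.inl) t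
        = (T⁻¹ *ᵥ deriv y t) ∘ Sum.inl := fun t =>
      (hasDerivAt_lin (F := F) (LinearMap.funLeft F F Sum.inl ∘ₗ Matrix.mulVecLin T⁻¹)
        (hydiff t).hasDerivAt).deriv
    have hw2d : ∀ t, deriv (fun t => (T⁻¹ *ᵥ y t) ∘ Sum.inr) t
        = (T⁻¹ *ᵥ deriv y t) ∘ Sum.inr := fun t =>
      (hasDerivAt_lin (F := F) (LinearMap.funLeft F F Sum.inr ∘ₗ Matrix.mulVecLin T⁻¹)
        (hydiff t).hasDerivAt).deriv
    have htrans : ∀ t ∈ Set.Icc (0 : ℝ) τ,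
        (deriv (fun s => (T⁻¹ *ᵥ y s) ∘ Sum.inl) t
            = J *ᵥ ((T⁻¹ *ᵥ y t) ∘ Sum.inl) + (S *ᵥ q t) ∘ Sum.inl) ∧
          (N *ᵥ deriv (fun s => (T⁻¹ *ᵥ y s) ∘ Sum.inr) t
            = (T⁻¹ *ᵥ y t) ∘ Sum.inr + (S *ᵥ q t) ∘ Sum.inr) := by
      intro t ht
      have h2 : Matrix.fromBlocks 1 0 0 N *ᵥ (T⁻¹ *ᵥ deriv y t)
          = Matrix.fromBlocks J 0 0 1 *ᵥ (T⁻¹ *ᵥ y t) + S *ᵥ q t := by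
        rw [hE2, hA2, hyeq t ht, Matrix.mulVec_add]
      rw [hblk, hblk, hpelim t, helim_add, one_mulVec, one_mulVec, helim] at h2
      obtain ⟨ha, hb⟩ := h2
      exact ⟨by rw [hw1d t]; exact ha, by rw [hw2d t]; exact hb⟩
    -- nilpotent part
    have hφeq : ∀ t ∈ Set.Icc (0 : ℝ) τ,
        N *ᵥ deriv (fun s => (T⁻¹ *ᵥ y s) ∘ Sum.inr - v s) t
          = (T⁻¹ *ᵥ y t) ∘ Sum.inr - v t := by
      intro t ht
      have hd : HasDerivAt (fun s => (T⁻¹ *ᵥ y s) ∘ Sum.inr - v s)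
          (deriv (fun s => (T⁻¹ *ᵥ y s) ∘ Sum.inr) t - deriv v t) t :=
        ((hw2diff t).hasDerivAt).sub ((hvdiff t).hasDerivAt)
      rw [hd.deriv]
      have hsub : ∀ a b : Fin na → F, N *ᵥ (a - b) = N *ᵥ a - N *ᵥ b := fun a b =>
        map_sub (Matrix.mulVecLin N) a b
      rw [hsub, (htrans t ht).2, hveq t]
      abel
    have hφ0 := vanish_of_nilpotent hN hτ (hw2diff.sub hvdiff) hφeq
    have hw2v : ∀ t ∈ Set.Icc (0 : ℝ) τ, (T⁻¹ *ᵥ y t) ∘ Sum.inr = v t := by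
      intro t ht
      have h := hφ0 t ht
      have h' : (T⁻¹ *ᵥ y t) ∘ Sum.inr - v t = 0 := h
      rwa [sub_eq_zero] at h'
    have hcons : (T⁻¹ *ᵥ x₀) ∘ Sum.inr = v 0 := by
      have h := hw2v 0 ⟨le_rfl, hτ.le⟩
      rwa [hy0] at h
    refine ⟨hcons, ?_⟩
    have hw1u : Set.EqOn (fun t => (T⁻¹ *ᵥ y t) ∘ Sum.inl) u (Set.Icc (0 : ℝ) τ) := by
      refine linODE_unique J hp1.continuous hw1diff (fun t ht => (htrans t ht).1) hudiff
        (fun t _ => huderiv t) ?_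
      show (T⁻¹ *ᵥ y 0) ∘ Sum.inl = u 0
      rw [hy0, hu0']
    intro t ht
    have hsplit : y t = T *ᵥ Sum.elim ((T⁻¹ *ᵥ y t) ∘ Sum.inl) ((T⁻¹ *ᵥ y t) ∘ Sum.inr) := by
      have e : Sum.elim ((T⁻¹ *ᵥ y t) ∘ Sum.inl) ((T⁻¹ *ᵥ y t) ∘ Sum.inr) = T⁻¹ *ᵥ y t := by
        funext i; cases i <;> rfl
      rw [e, hTmul']
    have e1 : (T⁻¹ *ᵥ y t) ∘ Sum.inl = u t := hw1u ht
    have e2 : (T⁻¹ *ᵥ y t) ∘ Sum.inr = v t := hw2v t ht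
    show y t = T *ᵥ Sum.elim (u t) (v t)
    rw [hsplit, e1, e2]
  -- assembling the statement
  refine ⟨⟨?_, ?_⟩, ?_⟩
  · rintro ⟨y, hy1, hyeq, hy0⟩
    exact hconsiff.2 (main_unique y hy1 hyeq hy0).1
  · intro hcons
    have hx0 : (fun t => T *ᵥ Sum.elim (u t) (v t)) 0 = x₀ := by
      show T *ᵥ Sum.elim (u 0) (v 0) = x₀
      rw [hu0']
      exact (hcons.trans hRHS).symm
    exact ⟨fun t => T *ᵥ Sum.elim (u t) (v t),
      hxsm.of_le (by exact_mod_cast le_top), fun t _ => hxeq t, hx0⟩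
  · intro hcons
    have hx0 : (fun t => T *ᵥ Sum.elim (u t) (v t)) 0 = x₀ := by
      show T *ᵥ Sum.elim (u 0) (v 0) = x₀
      rw [hu0']
      exact (hcons.trans hRHS).symm
    exact ⟨fun t => T *ᵥ Sum.elim (u t) (v t), hxsm, fun t _ => hxeq t, hx0,
      fun y hy1 hyeq hy0 => (main_unique y hy1 hyeq hy0).2⟩
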